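/- arXiv:1312.3113 — 2 statements merged into one kernel-verified Lean document; each statement's English description precedes it below -/
import Mathlib

section
/- In a free Lie algebra over ℚ with generators T and V, the degree-3 term of log(e^{(h/6)V} e^{(h/2)T} e^{(2h/3)V} e^{(h/2)T} e^{(h/6)V}) equals -(h³/72)[V,[T,V]]; i.e., the 5-stage scheme has shadow Hamiltonian H̃ = T + V - (h²/72)[V,[T,V]] + O(h⁴), with no [T,[T,V]] term. -/
open Polynomial

/-- Exponential series truncated at degree 3 (enough to determine a BCH logarithm
modulo degree ≥ 4 in `h = X`). -/
noncomputable def texp {A : Type*} [Ring A] [Algebra ℚ A] (x : Polynomial A) : Polynomial A :=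
  1 + x + (1/2 : ℚ) • x^2 + (1/6 : ℚ) • x^3

set_option linter.unusedSectionVars false

section
variable {A : Type*} [Ring A] [Algebra ℚ A] (p : Polynomial A) (h0 : p.coeff 0 = 0)
attribute [local simp] coeff_mul Finset.Nat.sum_antidiagonal_eq_sum_range_succ_mk
  Finset.sum_range_succ coeff_smul coeff_add coeff_one pow_succ
include h0
lemma texp_c0' : (texp p).coeff 0 = 1 := by simp [texp, h0]
lemma texp_c1' : (texp p).coeff 1 = p.coeff 1 := by simp [texp, h0]
lemma texp_c2' : (texp p).coeff 2 = p.coeff 2 + (1/2 : ℚ) • (p.coeff 1 * p.coeff 1) := by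
  simp [texp, h0]
lemma texp_c3' : (texp p).coeff 3 = p.coeff 3
    + (1/2 : ℚ) • (p.coeff 1 * p.coeff 2 + p.coeff 2 * p.coeff 1)
    + (1/6 : ℚ) • (p.coeff 1 * (p.coeff 1 * p.coeff 1)) := by
  simp [texp, h0, mul_assoc]
end

section
variable {A : Type*} [Ring A] [Algebra ℚ A] (a : ℚ) (w u : A)
attribute [local simp] coeff_mul Finset.Nat.sum_antidiagonal_eq_sum_range_succ_mk
  Finset.sum_range_succ coeff_smul coeff_add coeff_C_mul coeff_X coeff_X_pow coeff_C X_mul_C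

lemma a1c0 : (a • (X * C w)).coeff 0 = 0 := by simp
lemma a1c1 : (a • (X * C w)).coeff 1 = a • w := by simp
lemma a1c2 : (a • (X * C w)).coeff 2 = 0 := by simp
lemma a1c3 : (a • (X * C w)).coeff 3 = 0 := by simp
lemma a2c0 : (X * C w + X^3 * C u).coeff 0 = 0 := by norm_num
lemma a2c1 : (X * C w + X^3 * C u).coeff 1 = w := by norm_num
lemma a2c2 : (X * C w + X^3 * C u).coeff 2 = 0 := by norm_num
lemma a2c3 : (X * C w + X^3 * C u).coeff 3 = u := by norm_num

lemma A0 : (texp (a • (X * C w))).coeff 0 = 1 := texp_c0' _ (a1c0 a w)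
lemma A1 : (texp (a • (X * C w))).coeff 1 = a • w := by
  rw [texp_c1' _ (a1c0 a w), a1c1]
lemma A2 : (texp (a • (X * C w))).coeff 2 = (a * a / 2) • (w * w) := by
  rw [texp_c2' _ (a1c0 a w), a1c1, a1c2]
  rw [smul_mul_assoc, mul_smul_comm, smul_smul]; module
lemma A3 : (texp (a • (X * C w))).coeff 3 = (a * a * a / 6) • (w * (w * w)) := by
  rw [texp_c3' _ (a1c0 a w), a1c1, a1c2, a1c3]
  simp only [mul_zero, zero_mul, smul_zero, add_zero, zero_add, smul_mul_assoc,
    mul_smul_comm, smul_smul]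
  module
lemma B0 : (texp (X * C w + X^3 * C u)).coeff 0 = 1 := texp_c0' _ (a2c0 w u)
lemma B1 : (texp (X * C w + X^3 * C u)).coeff 1 = w := by
  rw [texp_c1' _ (a2c0 w u), a2c1]
lemma B2 : (texp (X * C w + X^3 * C u)).coeff 2 = (1/2 : ℚ) • (w * w) := by
  rw [texp_c2' _ (a2c0 w u), a2c1, a2c2]; simp
lemma B3 : (texp (X * C w + X^3 * C u)).coeff 3 = u + (1/6 : ℚ) • (w * (w * w)) := by
  rw [texp_c3' _ (a2c0 w u), a2c1, a2c2, a2c3]; simp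
end

/-- The 5-stage scheme: modulo `h⁴`,
`e^{(h/6)V} e^{(h/2)T} e^{(2h/3)V} e^{(h/2)T} e^{(h/6)V} = exp(h(T+V) - (h³/72)[V,[T,V]])`;
i.e. its shadow Hamiltonian is `H̃ = T + V - (h²/72)[V,[T,V]] + O(h⁴)`, with no
`[T,[T,V]]` term. -/
theorem five_stage_shadow_hamiltonian :
    ∀ T V : FreeAlgebra ℚ (Fin 2), T = FreeAlgebra.ι ℚ 0 → V = FreeAlgebra.ι ℚ 1 →
    ∀ k : ℕ, k ≤ 3 →
      (texp ((1/6 : ℚ) • (X * C V)) * texp ((1/2 : ℚ) • (X * C T))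
        * texp ((2/3 : ℚ) • (X * C V)) * texp ((1/2 : ℚ) • (X * C T))
        * texp ((1/6 : ℚ) • (X * C V))).coeff k
      = (texp (X * C (T + V) + X^3 * C ((-(1/72) : ℚ) • ⁅V, ⁅T, V⁆⁆))).coeff k := by
  intro T V hT hV k hk
  interval_cases k <;>
  · simp only [coeff_mul, Finset.Nat.sum_antidiagonal_eq_sum_range_succ_mk,
      Finset.sum_range_succ, Finset.sum_range_zero, Nat.reduceSub, A0, A1, A2, A3,
      B0, B1, B2, B3, one_mul, mul_one, zero_add, add_zero, zero_mul, mul_zero]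
    try simp only [Ring.lie_def, smul_mul_assoc, mul_smul_comm, smul_smul, smul_sub, smul_add,
      mul_add, add_mul, mul_assoc, sub_mul, mul_sub, one_mul, mul_one, zero_add, add_zero]
    try module
end

section
/- In a free Lie algebra over ℚ with generators T, V₁, V₂ subject to the relation [V₁,V₂] = 0, the h²-term of the shadow Hamiltonian of the integrator [e^{λhV₂} e^{(h/2)(V₁+T)} e^{(1-2λ)hV₂} e^{(h/2)(V₁+T)} e^{λhV₂}] equals ((-1+6λ-6λ²)/12)[V₂,[T,V₂]] + ((-1+6λ)/24)[V₁,[T,V₂]] + ((-1+6λ)/24)[T,[T,V₂]]. -/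
open Polynomial

lemma xc {A : Type*} [Ring A] (a : A) : X * C a = monomial 1 a := by
  rw [X_mul_C, C_mul_X_eq_monomial]

lemma x3c {A : Type*} [Ring A] (w : A) : X*X*X * C w = monomial 3 w := by
  rw [show (X*X*X : Polynomial A) = X^3 by simp [pow_succ], X_pow_mul_C, C_mul_X_pow_eq_monomial]

lemma texp_coeff {A : Type*} [Ring A] [Algebra ℚ A] (a w : A) :
    (texp (X * C a + X^3 * C w)).coeff 0 = 1 ∧
    (texp (X * C a + X^3 * C w)).coeff 1 = a ∧
    (texp (X * C a + X^3 * C w)).coeff 2 = (1/2:ℚ) • (a*a) ∧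
    (texp (X * C a + X^3 * C w)).coeff 3 = w + (1/6:ℚ) • (a*a*a) := by
  refine ⟨?_, ?_, ?_, ?_⟩ <;>
  · simp only [texp, pow_succ, pow_zero, one_mul, x3c, xc, mul_add, add_mul,
      monomial_mul_monomial, coeff_add, coeff_smul, coeff_monomial, coeff_one]
    norm_num

lemma texp_coeff' {A : Type*} [Ring A] [Algebra ℚ A] (a : A) :
    (texp (X * C a)).coeff 0 = 1 ∧
    (texp (X * C a)).coeff 1 = a ∧
    (texp (X * C a)).coeff 2 = (1/2:ℚ) • (a*a) ∧
    (texp (X * C a)).coeff 3 = (1/6:ℚ) • (a*a*a) := by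
  have := texp_coeff a (0:A)
  simpa using this

lemma smul_XC {A : Type*} [Ring A] [Algebra ℚ A] (q : ℚ) (v : A) :
    q • (X * C v) = X * C (q • v) := by
  rw [← smul_C, mul_smul_comm]

set_option maxHeartbeats 4000000 in
/-- For `T, V₁, V₂` with `[V₁,V₂] = 0`, the 5-stage nested integrator
`e^{λhV₂} e^{(h/2)(V₁+T)} e^{(1-2λ)hV₂} e^{(h/2)(V₁+T)} e^{λhV₂}` equals, modulo `h⁴`,
`exp(h(T+V₁+V₂) + h³·(((-1+6λ-6λ²)/12)[V₂,[T,V₂]] + ((-1+6λ)/24)[V₁,[T,V₂]]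
 + ((-1+6λ)/24)[T,[T,V₂]]))`; so its shadow Hamiltonian has exactly this `h²`-term. -/
theorem nested_five_stage_shadow_hamiltonian
    {A : Type*} [Ring A] [Algebra ℚ A] (T V₁ V₂ : A) (lam : ℚ)
    (hcomm : ⁅V₁, V₂⁆ = 0) :
    ∀ k : ℕ, k ≤ 3 →
      (texp (lam • (X * C V₂)) * texp ((1/2 : ℚ) • (X * C (V₁ + T)))
        * texp ((1 - 2*lam) • (X * C V₂)) * texp ((1/2 : ℚ) • (X * C (V₁ + T)))
        * texp (lam • (X * C V₂))).coeff k
      = (texp (X * C (T + V₁ + V₂)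
          + X^3 * C (((-1 + 6*lam - 6*lam^2)/12) • ⁅V₂, ⁅T, V₂⁆⁆
            + ((-1 + 6*lam)/24) • ⁅V₁, ⁅T, V₂⁆⁆
            + ((-1 + 6*lam)/24) • ⁅T, ⁅T, V₂⁆⁆))).coeff k := by
  intro k hk
  rw [smul_XC, smul_XC, smul_XC]
  set a1 := lam • V₂ with ha1
  set a2 := (1/2:ℚ) • (V₁ + T) with ha2
  set a3 := (1 - 2*lam) • V₂ with ha3
  have k1 : V₁ * V₂ = V₂ * V₁ := by
    have := hcomm; rw [Ring.lie_def, sub_eq_zero] at this; exact this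
  have k2 : ∀ x : A, V₁ * (V₂ * x) = V₂ * (V₁ * x) := fun x => by
    rw [← mul_assoc, k1, mul_assoc]
  obtain ⟨p0, p1, p2, p3⟩ := texp_coeff' a1
  obtain ⟨q0, q1, q2, q3⟩ := texp_coeff' a2
  obtain ⟨r0, r1, r2, r3⟩ := texp_coeff' a3
  obtain ⟨s0, s1, s2, s3⟩ := texp_coeff (A := A) (T + V₁ + V₂)
    (((-1 + 6*lam - 6*lam^2)/12) • ⁅V₂, ⁅T, V₂⁆⁆
            + ((-1 + 6*lam)/24) • ⁅V₁, ⁅T, V₂⁆⁆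
            + ((-1 + 6*lam)/24) • ⁅T, ⁅T, V₂⁆⁆)
  interval_cases k <;>
  · simp only [coeff_mul, Finset.Nat.sum_antidiagonal_eq_sum_range_succ_mk,
      Finset.sum_range_succ, Finset.sum_range_zero, Nat.reduceSub,
      p0, p1, p2, p3, q0, q1, q2, q3, r0, r1, r2, r3, s0, s1, s2, s3,
      one_mul, mul_one, add_zero, zero_add]
    try simp only [ha1, ha2, ha3, Ring.lie_def, mul_add, add_mul, mul_sub, sub_mul,
      smul_add, smul_sub, smul_smul, mul_smul_comm, smul_mul_assoc, mul_assoc, k1, k2]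
    try module
end
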